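/- Let d : ℝ → ℝ be Lipschitz continuous with constant L. Then there exists a constant C (depending only on L) such that for all x ∈ ℝ and all s with 0 < |s| < π, |tanh((d(x)-d(x-s))/2)/tan(s/2) - (d(x)-d(x-s))/2 / (s/2)| ≤ C·s^2. -/

import Mathlib

open Real

lemma myHasDerivAt_tanh (x : ℝ) : HasDerivAt Real.tanh (1 / Real.cosh x ^ 2) x := by
  have h := (Real.hasDerivAt_sinh x).div (Real.hasDerivAt_cosh x) (Real.cosh_pos x).ne'
  have e1 : (Real.sinh / Real.cosh) = Real.tanh := by
    funext y; rw [Real.tanh_eq_sinh_div_cosh, Pi.div_apply]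
  have e2 : (Real.cosh x * Real.cosh x - Real.sinh x * Real.sinh x) / Real.cosh x ^ 2
      = 1 / Real.cosh x ^ 2 := by
    rw [show Real.cosh x * Real.cosh x - Real.sinh x * Real.sinh x
        = Real.cosh x ^ 2 - Real.sinh x ^ 2 by ring, Real.cosh_sq_sub_sinh_sq]
  rwa [e1, e2] at h

lemma tanh_nonneg {x : ℝ} (hx : 0 ≤ x) : 0 ≤ Real.tanh x := by
  rw [Real.tanh_eq_sinh_div_cosh]
  exact div_nonneg (by rwa [Real.sinh_nonneg_iff]) (Real.cosh_pos x).le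

lemma tanh_le_self {x : ℝ} (hx : 0 ≤ x) : Real.tanh x ≤ x := by
  have hmono : MonotoneOn (fun y => y - Real.tanh y) (Set.Ici 0) := by
    apply monotoneOn_of_deriv_nonneg (convex_Ici 0)
    · have hcont : Continuous Real.tanh :=
        continuous_iff_continuousAt.mpr fun y => (myHasDerivAt_tanh y).continuousAt
      exact (continuous_id.sub hcont).continuousOn
    · intro y _
      have hD : HasDerivAt (fun y : ℝ => y - Real.tanh y) (1 - 1 / Real.cosh y ^ 2) y :=
        (hasDerivAt_id y).sub (myHasDerivAt_tanh y)
      exact hD.differentiableAt.differentiableWithinAt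
    · intro y _
      have hD : HasDerivAt (fun y : ℝ => y - Real.tanh y) (1 - 1 / Real.cosh y ^ 2) y :=
        (hasDerivAt_id y).sub (myHasDerivAt_tanh y)
      rw [hD.deriv]
      have h1 : (1:ℝ) ≤ Real.cosh y ^ 2 := by nlinarith [Real.one_le_cosh y]
      have := div_le_one_of_le₀ h1 (by positivity)
      linarith [this]
  have := hmono (Set.self_mem_Ici) (Set.mem_Ici.mpr hx) hx
  norm_num [Real.tanh_zero] at this
  linarith

lemma self_sub_cube_le_tanh {x : ℝ} (hx : 0 ≤ x) : x - x ^ 3 / 3 ≤ Real.tanh x := by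
  have hmono : MonotoneOn (fun y => y ^ 3 / 3 - y + Real.tanh y) (Set.Ici 0) := by
    apply monotoneOn_of_deriv_nonneg (convex_Ici 0)
    · have hcont : Continuous Real.tanh :=
        continuous_iff_continuousAt.mpr fun y => (myHasDerivAt_tanh y).continuousAt
      exact ((((continuous_pow 3).div_const 3).sub continuous_id).add hcont).continuousOn
    · intro y _
      have hD : HasDerivAt (fun y : ℝ => y ^ 3 / 3 - y + Real.tanh y)
          ((3 : ℕ) * y ^ (3 - 1) / 3 - 1 + 1 / Real.cosh y ^ 2) y :=
        (((hasDerivAt_pow 3 y).div_const 3).sub (hasDerivAt_id y)).add (myHasDerivAt_tanh y)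
      exact hD.differentiableAt.differentiableWithinAt
    · intro y hy
      rw [interior_Ici] at hy
      have hy0 : (0:ℝ) ≤ y := le_of_lt hy
      have hD : HasDerivAt (fun y : ℝ => y ^ 3 / 3 - y + Real.tanh y)
          ((3 : ℕ) * y ^ (3 - 1) / 3 - 1 + 1 / Real.cosh y ^ 2) y :=
        (((hasDerivAt_pow 3 y).div_const 3).sub (hasDerivAt_id y)).add (myHasDerivAt_tanh y)
      rw [hD.deriv]
      have hc : 0 < Real.cosh y ^ 2 := by positivity
      have htt : Real.tanh y ^ 2 = 1 - 1 / Real.cosh y ^ 2 := by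
        rw [Real.tanh_eq_sinh_div_cosh, div_pow]
        rw [Real.sinh_sq]
        field_simp
      have h1 : Real.tanh y ≤ y := tanh_le_self hy0
      have h2 : 0 ≤ Real.tanh y := tanh_nonneg hy0
      have : Real.tanh y ^ 2 ≤ y ^ 2 := by nlinarith
      rw [htt] at this
      have h3 : ((3:ℕ):ℝ) * y ^ (3 - 1) / 3 = y ^ 2 := by norm_num
      rw [h3]
      linarith [this]
  have := hmono (Set.self_mem_Ici) (Set.mem_Ici.mpr hx) hx
  norm_num [Real.tanh_zero] at this
  linarith

lemma abs_tanh_sub_le (x : ℝ) : |Real.tanh x - x| ≤ |x| ^ 3 / 3 := by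
  rcases le_or_gt 0 x with hx | hx
  · rw [abs_of_nonneg hx, abs_of_nonpos (by linarith [tanh_le_self hx])]
    linarith [self_sub_cube_le_tanh hx]
  · have hx' : 0 ≤ -x := by linarith
    have h1 := tanh_le_self hx'
    have h2 := self_sub_cube_le_tanh hx'
    rw [Real.tanh_neg] at h1 h2
    rw [abs_of_neg hx, abs_of_nonneg (by linarith)]
    nlinarith

lemma key_bound (L : ℝ) (hL : 0 ≤ L) (t δ : ℝ) (ht : 0 < t) (ht2 : t < π / 2)
    (hδ : |δ| ≤ L * t) :
    |Real.tanh δ / Real.tan t - δ / t| ≤ (L ^ 3 / 3 + L / 2) * t ^ 2 := by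
  set T := Real.tan t with hT
  have htT : t ≤ T := Real.le_tan ht.le ht2
  have hTpos : 0 < T := lt_of_lt_of_le ht htT
  rw [div_sub_div _ _ hTpos.ne' ht.ne', abs_div, abs_of_pos (by positivity : (0:ℝ) < T * t),
    div_le_iff₀ (by positivity : (0:ℝ) < T * t)]
  have hnum : |Real.tanh δ * t - T * δ| ≤ |Real.tanh δ - δ| * t + |δ| * (T - t) := by
    have e : Real.tanh δ * t - T * δ = (Real.tanh δ - δ) * t + δ * (t - T) := by ring
    rw [e]
    calc |(Real.tanh δ - δ) * t + δ * (t - T)|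
        ≤ |(Real.tanh δ - δ) * t| + |δ * (t - T)| := abs_add_le _ _
      _ = |Real.tanh δ - δ| * |t| + |δ| * |t - T| := by rw [abs_mul, abs_mul]
      _ = |Real.tanh δ - δ| * t + |δ| * (T - t) := by
          rw [abs_of_pos ht, abs_sub_comm t T, abs_of_nonneg (by linarith : (0:ℝ) ≤ T - t)]
  have h1 : |Real.tanh δ - δ| ≤ |δ| ^ 3 / 3 := abs_tanh_sub_le δ
  have h2 : |δ| ^ 3 ≤ (L * t) ^ 3 := pow_le_pow_left₀ (abs_nonneg δ) hδ 3
  have hcos : Real.cos t > 0 := Real.cos_pos_of_mem_Ioo ⟨by linarith, ht2⟩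
  have hsin : T * Real.cos t = Real.sin t := Real.tan_mul_cos hcos.ne'
  have hsle : Real.sin t ≤ t := Real.sin_le ht.le
  have hcq : 1 - t ^ 2 / 2 ≤ Real.cos t := Real.one_sub_sq_div_two_le_cos
  -- T - t ≤ T - sin t = T(1 - cos t) ≤ T * t^2/2
  have hTt : T - t ≤ T * (t ^ 2 / 2) := by nlinarith
  have habs : 0 ≤ |δ| := abs_nonneg δ
  calc |Real.tanh δ * t - T * δ| ≤ |δ| ^ 3 / 3 * t + |δ| * (T - t) := by nlinarith
    _ ≤ (L * t) ^ 3 / 3 * t + (L * t) * (T * (t ^ 2 / 2)) := by nlinarith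
    _ ≤ (L ^ 3 / 3 + L / 2) * t ^ 2 * (T * t) := by
        have hmul : L ^ 3 * t ^ 3 * t ≤ L ^ 3 * t ^ 3 * T :=
          mul_le_mul_of_nonneg_left htT (by positivity)
        nlinarith [hmul]

open Real NNReal in
theorem abs_tanh_div_tan_sub_delta_div_half_le
    (L : ℝ≥0) :
    ∃ C : ℝ, 0 < C ∧ ∀ (d : ℝ → ℝ), LipschitzWith L d →
      ∀ (x s : ℝ), 0 < |s| → |s| < π →
        |Real.tanh ((d x - d (x - s)) / 2) / Real.tan (s / 2) -
          ((d x - d (x - s)) / 2) / (s / 2)| ≤ C * s ^ 2 := by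
  have hLnn : (0:ℝ) ≤ (L:ℝ) := L.coe_nonneg
  refine ⟨(L:ℝ) ^ 3 / 3 + (L:ℝ) / 2 + 1, by nlinarith [pow_nonneg hLnn 3], ?_⟩
  intro d hd x s hs0 hsπ
  set δ : ℝ := (d x - d (x - s)) / 2 with hδdef
  have hL : (0:ℝ) ≤ L := L.coe_nonneg
  have hdist : |d x - d (x - s)| ≤ (L:ℝ) * |s| := by
    have := hd.dist_le_mul x (x - s)
    rw [Real.dist_eq, Real.dist_eq] at this
    simpa using this
  have hδb : |δ| ≤ (L:ℝ) * (|s| / 2) := by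
    rw [hδdef, abs_div, abs_two]
    linarith
  have hs2 : (0:ℝ) < s ^ 2 := pow_pos (abs_pos.mpr (abs_pos.mp hs0)) 2 |>.trans_le (by rw [sq_abs])
  
  obtain hs | hs := (abs_pos.mp hs0).lt_or_gt
  · -- s < 0, use t = -s/2
    have habs : |s| = -s := abs_of_neg hs
    have hkey := key_bound (L:ℝ) hL (-s / 2) δ (by linarith) (by rw [habs] at hsπ; linarith)
      (by rw [habs] at hδb; linarith [hδb])
    have heq : Real.tanh δ / Real.tan (s / 2) - δ / (s / 2)
        = -(Real.tanh δ / Real.tan (-s / 2) - δ / (-s / 2)) := by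
      rw [show s / 2 = -(-s / 2) by ring, Real.tan_neg]
      ring
    rw [heq, abs_neg]
    calc _ ≤ ((L:ℝ) ^ 3 / 3 + (L:ℝ) / 2) * (-s / 2) ^ 2 := hkey
      _ ≤ ((L:ℝ) ^ 3 / 3 + (L:ℝ) / 2 + 1) * s ^ 2 := by
          nlinarith [mul_nonneg (pow_nonneg hL 3) hs2.le, mul_nonneg hL hs2.le]
  · -- 0 < s
    have habs : |s| = s := abs_of_pos hs
    have hkey := key_bound (L:ℝ) hL (s / 2) δ (by linarith) (by rw [habs] at hsπ; linarith)
      (by rw [habs] at hδb; linarith [hδb])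
    calc _ ≤ ((L:ℝ) ^ 3 / 3 + (L:ℝ) / 2) * (s / 2) ^ 2 := hkey
      _ ≤ ((L:ℝ) ^ 3 / 3 + (L:ℝ) / 2 + 1) * s ^ 2 := by
          nlinarith [mul_nonneg (pow_nonneg hL 3) hs2.le, mul_nonneg hL hs2.le]
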